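/- If x = (z, z⊥) is a decomposition of the input variable and p(y|x), p(y|z) are conditional densities, then SCẼ(Y|Z) - SCẼ(Y|X) = (1/2)∬ (p(y|x) - p(y|z))² p(x) dx dy, and in particular SCẼ(Y|Z) ≥ SCẼ(Y|X). -/

import Mathlib

open MeasureTheory

/-- Fubini for a triple product `(μ.prod ν).prod ρ`, integrating the middle variable last. -/
lemma fubini3_aux {Zs Zp Ys : Type*} [MeasurableSpace Zs] [MeasurableSpace Zp]
    [MeasurableSpace Ys]
    (μ : Measure Zs) (ν : Measure Zp) (ρ : Measure Ys)
    [SigmaFinite μ] [SigmaFinite ν] [SigmaFinite ρ]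
    {F : (Zs × Zp) × Ys → ℝ} (hF : Integrable F ((μ.prod ν).prod ρ)) :
    ∫ a, F a ∂((μ.prod ν).prod ρ) = ∫ z, ∫ y, ∫ w, F ((z, w), y) ∂ν ∂ρ ∂μ := by
  have mp := measurePreserving_prodAssoc μ ν ρ
  set G : Zs × (Zp × Ys) → ℝ := fun b => F ((b.1, b.2.1), b.2.2) with hGdef
  have hGe : (fun a : (Zs × Zp) × Ys => G (MeasurableEquiv.prodAssoc a)) = F := rfl
  have hG : Integrable G (μ.prod (ν.prod ρ)) := by
    have := (mp.integrable_comp_emb MeasurableEquiv.prodAssoc.measurableEmbedding (g := G))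
    rw [show (G ∘ MeasurableEquiv.prodAssoc) = F from rfl] at this
    exact this.mp hF
  have h1 : ∫ a, F a ∂((μ.prod ν).prod ρ) = ∫ b, G b ∂(μ.prod (ν.prod ρ)) :=
    mp.integral_comp' G
  rw [h1, integral_prod G hG]
  refine integral_congr_ae ?_
  filter_upwards [hG.prod_right_ae] with z hz
  exact integral_prod_symm _ hz

theorem sce_difference_eq_half_sq_integral
    {Zs Zp Ys : Type*} [MeasurableSpace Zs] [MeasurableSpace Zp] [MeasurableSpace Ys]
    (μ : Measure Zs) (ν : Measure Zp) (ρ : Measure Ys)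
    [SigmaFinite μ] [SigmaFinite ν] [SigmaFinite ρ]
    (pj : (Zs × Zp) × Ys → ℝ)    -- joint density p(x, y) = p(z, z⊥, y)
    (px : Zs × Zp → ℝ) (pz : Zs → ℝ) (pzy : Zs × Ys → ℝ)
    (hpjnn : ∀ a, 0 ≤ pj a)
    (hpjint : Integrable pj ((μ.prod ν).prod ρ))
    (hpx : ∀ x, px x = ∫ y, pj (x, y) ∂ρ)
    (hpz : ∀ z, pz z = ∫ w, px (z, w) ∂ν)
    (hpzy : ∀ z y, pzy (z, y) = ∫ w, pj ((z, w), y) ∂ν)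
    (hpxpos : ∀ x, 0 < px x)
    (hpzpos : ∀ z, 0 < pz z)
    (hix : Integrable (fun a => (pj a / px a.1) ^ 2 * px a.1) ((μ.prod ν).prod ρ))
    (hiz : Integrable (fun a => (pzy a / pz a.1) ^ 2 * pz a.1) (μ.prod ρ))
    (hizx : Integrable (fun a => (pzy (a.1.1, a.2) / pz a.1.1) ^ 2 * px a.1)
      ((μ.prod ν).prod ρ)) :
    (-(1 / 2) * ∫ a, (pzy a / pz a.1) ^ 2 * pz a.1 ∂(μ.prod ρ))
        - (-(1 / 2) * ∫ a, (pj a / px a.1) ^ 2 * px a.1 ∂((μ.prod ν).prod ρ))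
      = (1 / 2) * ∫ a, (pj a / px a.1 - pzy (a.1.1, a.2) / pz a.1.1) ^ 2 * px a.1
          ∂((μ.prod ν).prod ρ)
    ∧ (-(1 / 2) * ∫ a, (pzy a / pz a.1) ^ 2 * pz a.1 ∂(μ.prod ρ))
        ≥ -(1 / 2) * ∫ a, (pj a / px a.1) ^ 2 * px a.1 ∂((μ.prod ν).prod ρ) := by
  have hpzy_nn : ∀ b : Zs × Ys, 0 ≤ pzy b := by
    rintro ⟨z, y⟩
    rw [hpzy z y]
    exact integral_nonneg fun w => hpjnn _
  -- measurability of `px ∘ fst`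
  have hpx_meas : AEStronglyMeasurable px (μ.prod ν) := by
    have h := hpjint.aestronglyMeasurable.integral_prod_right'
    rwa [show px = fun x => ∫ y, pj (x, y) ∂ρ from funext hpx]
  have hpxfst : AEStronglyMeasurable (fun a : (Zs × Zp) × Ys => px a.1)
      ((μ.prod ν).prod ρ) := hpx_meas.comp_fst
  -- measurability of the lifted conditional density `v`
  have hvbig : AEStronglyMeasurable (fun a : (Zs × Zp) × Ys => pzy (a.1.1, a.2) / pz a.1.1)
      ((μ.prod ν).prod ρ) := by
    have h2 : AEMeasurable
        (fun a : (Zs × Zp) × Ys => ((pzy (a.1.1, a.2) / pz a.1.1) ^ 2 * px a.1) / px a.1)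
        ((μ.prod ν).prod ρ) :=
      hizx.aestronglyMeasurable.aemeasurable.div hpxfst.aemeasurable
    have h3 : AEMeasurable
        (fun a : (Zs × Zp) × Ys =>
          Real.sqrt (((pzy (a.1.1, a.2) / pz a.1.1) ^ 2 * px a.1) / px a.1))
        ((μ.prod ν).prod ρ) := (Real.continuous_sqrt.measurable.comp_aemeasurable h2)
    refine h3.aestronglyMeasurable.congr (Filter.Eventually.of_forall fun a => ?_)
    have hpxne : px a.1 ≠ 0 := (hpxpos a.1).ne'
    have hvnn : 0 ≤ pzy (a.1.1, a.2) / pz a.1.1 :=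
      div_nonneg (hpzy_nn _) (hpzpos a.1.1).le
    simp only [Function.comp_apply]
    rw [mul_div_assoc, div_self hpxne, mul_one, Real.sqrt_sq hvnn]
  -- integrability of the cross term
  have cross_int : Integrable (fun a : (Zs × Zp) × Ys => pzy (a.1.1, a.2) / pz a.1.1 * pj a)
      ((μ.prod ν).prod ρ) := by
    refine Integrable.mono' ((hizx.add hix).div_const 2) (hvbig.mul hpjint.aestronglyMeasurable)
      (Filter.Eventually.of_forall fun a => ?_)
    have hpxp := hpxpos a.1
    have hvnn : 0 ≤ pzy (a.1.1, a.2) / pz a.1.1 :=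
      div_nonneg (hpzy_nn _) (hpzpos a.1.1).le
    have hpj : pj a = (pj a / px a.1) * px a.1 := by field_simp
    simp only [Pi.add_apply]
    rw [Real.norm_eq_abs, abs_of_nonneg (mul_nonneg hvnn (hpjnn a))]
    set u := pj a / px a.1
    set v := pzy (a.1.1, a.2) / pz a.1.1
    rw [hpj]
    nlinarith [mul_nonneg (sq_nonneg (u - v)) hpxp.le]
  -- Fubini identity for the squared-v term
  have E2 : ∫ a, (pzy (a.1.1, a.2) / pz a.1.1) ^ 2 * px a.1 ∂((μ.prod ν).prod ρ)
      = ∫ b, (pzy b / pz b.1) ^ 2 * pz b.1 ∂(μ.prod ρ) := by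
    rw [fubini3_aux μ ν ρ hizx, integral_prod _ hiz]
    refine integral_congr_ae (Filter.Eventually.of_forall fun z => ?_)
    refine integral_congr_ae (Filter.Eventually.of_forall fun y => ?_)
    simp only [integral_const_mul]
    rw [← hpz z]
  -- Fubini identity for the cross term
  have E1 : ∫ a, pzy (a.1.1, a.2) / pz a.1.1 * pj a ∂((μ.prod ν).prod ρ)
      = ∫ b, (pzy b / pz b.1) ^ 2 * pz b.1 ∂(μ.prod ρ) := by
    rw [fubini3_aux μ ν ρ cross_int, integral_prod _ hiz]
    refine integral_congr_ae (Filter.Eventually.of_forall fun z => ?_)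
    refine integral_congr_ae (Filter.Eventually.of_forall fun y => ?_)
    simp only [integral_const_mul]
    rw [← hpzy z y]
    have hz := (hpzpos z).ne'
    field_simp
  -- expand the square
  have expand : (fun a : (Zs × Zp) × Ys =>
      (pj a / px a.1 - pzy (a.1.1, a.2) / pz a.1.1) ^ 2 * px a.1)
      = fun a => ((pj a / px a.1) ^ 2 * px a.1
          - 2 * (pzy (a.1.1, a.2) / pz a.1.1 * pj a))
          + (pzy (a.1.1, a.2) / pz a.1.1) ^ 2 * px a.1 := by
    funext a
    have hpxne : px a.1 ≠ 0 := (hpxpos a.1).ne'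
    field_simp
    ring
  have hC : ∫ a, (pj a / px a.1 - pzy (a.1.1, a.2) / pz a.1.1) ^ 2 * px a.1
        ∂((μ.prod ν).prod ρ)
      = (∫ a, (pj a / px a.1) ^ 2 * px a.1 ∂((μ.prod ν).prod ρ))
        - (∫ b, (pzy b / pz b.1) ^ 2 * pz b.1 ∂(μ.prod ρ)) := by
    have hcm : Integrable (fun a : (Zs × Zp) × Ys =>
        2 * (pzy (a.1.1, a.2) / pz a.1.1 * pj a)) ((μ.prod ν).prod ρ) :=
      cross_int.const_mul 2
    have h4 : Integrable (fun a : (Zs × Zp) × Ys =>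
        (pj a / px a.1) ^ 2 * px a.1 - 2 * (pzy (a.1.1, a.2) / pz a.1.1 * pj a))
        ((μ.prod ν).prod ρ) := hix.sub hcm
    rw [expand, integral_add h4 hizx, integral_sub hix hcm, integral_const_mul, E1, E2]
    ring
  have hCnn : 0 ≤ ∫ a, (pj a / px a.1 - pzy (a.1.1, a.2) / pz a.1.1) ^ 2 * px a.1
      ∂((μ.prod ν).prod ρ) :=
    integral_nonneg fun a => mul_nonneg (sq_nonneg _) (hpxpos a.1).le
  constructor
  · rw [hC]; ring
  · rw [ge_iff_le, hC] at *
    linarith
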